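/- Let d₁, d₂ be real numbers with 2 ≤ d₁ < d₂, and let r₋, r₊ be as defined. Then the interval integral from r₋ to r₊ of (1/π)·(d₁d₂/(d₁+d₂))·sqrt((x²−r₋²)·(r₊²−x²)) / ((d₁d₂−x²)·x) dx equals d₁/(d₁+d₂). -/

import Mathlib

open Real MeasureTheory intervalIntegral Set

set_option maxHeartbeats 1000000 in
theorem key (a b c : ℝ) (ha : 0 < a) (hab : a < b) (hbc : b < c) :
    ∫ x in Real.sqrt a..Real.sqrt b,
        Real.sqrt ((x ^ 2 - a) * (b - x ^ 2)) / ((c - x ^ 2) * x)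
      = Real.pi * (c - Real.sqrt (a * b) - Real.sqrt ((c - a) * (c - b))) / (2 * c) := by
  have hb : 0 < b := ha.trans hab
  have hc : 0 < c := hb.trans hbc
  have hba : (0:ℝ) < b - a := sub_pos.2 hab
  have hban : (b - a) ≠ 0 := hba.ne'
  have hca : (0:ℝ) < c - a := sub_pos.2 (hab.trans hbc)
  have hcb : (0:ℝ) < c - b := sub_pos.2 hbc
  have hsa : 0 < Real.sqrt a := Real.sqrt_pos.2 ha
  have hsb : Real.sqrt a < Real.sqrt b := Real.sqrt_lt_sqrt ha.le hab
  set sab := Real.sqrt (a * b) with hsab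
  set scc := Real.sqrt ((c - a) * (c - b)) with hscc
  have hsab2 : sab ^ 2 = a * b := Real.sq_sqrt (by positivity)
  have hscc2 : scc ^ 2 = (c - a) * (c - b) := Real.sq_sqrt (by positivity)
  have hsabpos : 0 < sab := Real.sqrt_pos.2 (by positivity)
  have hsccpos : 0 < scc := Real.sqrt_pos.2 (by positivity)
  have neOf : ∀ t : ℝ, 0 < 1 - t ^ 2 → t ≠ -1 ∧ t ≠ 1 := by
    intro t h
    constructor <;> rintro rfl <;> norm_num at h
  set F : ℝ → ℝ := fun x =>
    (1 / (2 * c)) * (c * Real.arcsin ((2 * x ^ 2 - a - b) / (b - a))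
      - sab * Real.arcsin (((a + b) * x ^ 2 - 2 * (a * b)) / (x ^ 2 * (b - a)))
      + scc * Real.arcsin (((2 * c - a - b) * (c - x ^ 2) - 2 * ((c - a) * (c - b)))
          / ((c - x ^ 2) * (b - a)))) with hF
  have hIcc : ∀ x ∈ Icc (Real.sqrt a) (Real.sqrt b),
      0 < x ∧ a ≤ x ^ 2 ∧ x ^ 2 ≤ b := by
    intro x hx
    have hx0 : 0 < x := lt_of_lt_of_le hsa hx.1
    refine ⟨hx0, ?_, ?_⟩
    · nlinarith [Real.sq_sqrt ha.le, hx.1, Real.sqrt_nonneg a]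
    · nlinarith [Real.sq_sqrt hb.le, hx.2, hx0]
  have hcont : ContinuousOn F (Icc (Real.sqrt a) (Real.sqrt b)) := by
    apply ContinuousOn.mul continuousOn_const
    apply ContinuousOn.add
    apply ContinuousOn.sub
    · exact ContinuousOn.mul continuousOn_const
        (Real.continuous_arcsin.comp_continuousOn
          (ContinuousOn.div (by fun_prop) continuousOn_const (fun x _ => hban)))
    · apply ContinuousOn.mul continuousOn_const
      apply Real.continuous_arcsin.comp_continuousOn
      apply ContinuousOn.div (by fun_prop) (by fun_prop)
      intro x hx
      obtain ⟨hx0, h1, h2⟩ := hIcc x hx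
      positivity
    · apply ContinuousOn.mul continuousOn_const
      apply Real.continuous_arcsin.comp_continuousOn
      apply ContinuousOn.div (by fun_prop) (by fun_prop)
      intro x hx
      obtain ⟨hx0, h1, h2⟩ := hIcc x hx
      have h3 : 0 < c - x ^ 2 := by nlinarith
      positivity
  have hint : IntervalIntegrable
      (fun x => Real.sqrt ((x ^ 2 - a) * (b - x ^ 2)) / ((c - x ^ 2) * x))
      volume (Real.sqrt a) (Real.sqrt b) := by
    apply ContinuousOn.intervalIntegrable
    rw [uIcc_of_le hsb.le]
    apply ContinuousOn.div (by fun_prop)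
    · fun_prop
    · intro x hx
      obtain ⟨hx0, h1, h2⟩ := hIcc x hx
      have h3 : 0 < c - x ^ 2 := by nlinarith
      positivity
  have hderiv : ∀ x ∈ Ioo (Real.sqrt a) (Real.sqrt b),
      HasDerivAt F (Real.sqrt ((x ^ 2 - a) * (b - x ^ 2)) / ((c - x ^ 2) * x)) x := by
    intro x hx
    have hx0 : 0 < x := lt_of_lt_of_le hsa hx.1.le
    have h1 : a < x ^ 2 := by
      nlinarith [Real.sq_sqrt ha.le, hx.1, Real.sqrt_nonneg a]
    have h2 : x ^ 2 < b := by
      nlinarith [Real.sq_sqrt hb.le, hx.2, hx0]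
    have hcx : 0 < c - x ^ 2 := by nlinarith
    have hR : 0 < (x ^ 2 - a) * (b - x ^ 2) := by nlinarith
    set s := Real.sqrt ((x ^ 2 - a) * (b - x ^ 2)) with hs
    have hspos : 0 < s := Real.sqrt_pos.2 hR
    have hs2 : s ^ 2 = (x ^ 2 - a) * (b - x ^ 2) := Real.sq_sqrt hR.le
    -- 1 - ψᵢ² identities
    have e0 : 1 - ((2 * x ^ 2 - a - b) / (b - a)) ^ 2
        = (2 / (b - a)) ^ 2 * ((x ^ 2 - a) * (b - x ^ 2)) := by
      field_simp; ring
    have e1 : 1 - (((a + b) * x ^ 2 - 2 * (a * b)) / (x ^ 2 * (b - a))) ^ 2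
        = (2 * sab / (x ^ 2 * (b - a))) ^ 2 * ((x ^ 2 - a) * (b - x ^ 2)) := by
      have hx2 : x ^ 2 ≠ 0 := by positivity
      field_simp
      linear_combination (-4 * ((x ^ 2 - a) * (b - x ^ 2))) * hsab2
    have e2 : 1 - (((2 * c - a - b) * (c - x ^ 2) - 2 * ((c - a) * (c - b)))
          / ((c - x ^ 2) * (b - a))) ^ 2
        = (2 * scc / ((c - x ^ 2) * (b - a))) ^ 2 * ((x ^ 2 - a) * (b - x ^ 2)) := by
      field_simp
      linear_combination (-4 * ((x ^ 2 - a) * (b - x ^ 2))) * hscc2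
    have key0 : Real.sqrt (1 - ((2 * x ^ 2 - a - b) / (b - a)) ^ 2) = 2 / (b - a) * s := by
      rw [e0, Real.sqrt_mul (sq_nonneg _), Real.sqrt_sq (by positivity)]
    have key1 : Real.sqrt (1 - (((a + b) * x ^ 2 - 2 * (a * b)) / (x ^ 2 * (b - a))) ^ 2)
        = 2 * sab / (x ^ 2 * (b - a)) * s := by
      rw [e1, Real.sqrt_mul (sq_nonneg _), Real.sqrt_sq (by positivity)]
    have key2 : Real.sqrt (1 - (((2 * c - a - b) * (c - x ^ 2) - 2 * ((c - a) * (c - b)))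
          / ((c - x ^ 2) * (b - a))) ^ 2)
        = 2 * scc / ((c - x ^ 2) * (b - a)) * s := by
      rw [e2, Real.sqrt_mul (sq_nonneg _), Real.sqrt_sq (by positivity)]
    -- positivity of 1 - ψᵢ²
    have p0 : 0 < 1 - ((2 * x ^ 2 - a - b) / (b - a)) ^ 2 := by rw [e0]; positivity
    have p1 : 0 < 1 - (((a + b) * x ^ 2 - 2 * (a * b)) / (x ^ 2 * (b - a))) ^ 2 := by
      rw [e1]; positivity
    have p2 : 0 < 1 - (((2 * c - a - b) * (c - x ^ 2) - 2 * ((c - a) * (c - b)))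
          / ((c - x ^ 2) * (b - a))) ^ 2 := by rw [e2]; positivity
    -- inner derivatives
    have h0in : HasDerivAt (fun y : ℝ => (2 * y ^ 2 - a - b) / (b - a)) (4 * x / (b - a)) x := by
      have hp : HasDerivAt (fun y : ℝ => 2 * y ^ 2 - a - b) (4 * x) x := by
        have := (((hasDerivAt_pow 2 x).const_mul (2:ℝ)).sub_const a).sub_const b
        refine this.congr_deriv ?_
        push_cast; ring
      exact hp.div_const (b - a)
    have h1in : HasDerivAt (fun y : ℝ => ((a + b) * y ^ 2 - 2 * (a * b)) / (y ^ 2 * (b - a)))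
        (4 * (a * b) / (x ^ 3 * (b - a))) x := by
      have hnum : HasDerivAt (fun y : ℝ => (a + b) * y ^ 2 - 2 * (a * b)) (2 * (a + b) * x) x := by
        have := ((hasDerivAt_pow 2 x).const_mul (a + b)).sub_const (2 * (a * b))
        refine this.congr_deriv ?_
        push_cast; ring
      have hden : HasDerivAt (fun y : ℝ => y ^ 2 * (b - a)) (2 * x * (b - a)) x := by
        have := (hasDerivAt_pow 2 x).mul_const (b - a)
        refine this.congr_deriv ?_
        push_cast; ring
      have hden0 : x ^ 2 * (b - a) ≠ 0 := by positivity
      have := hnum.div hden hden0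
      refine this.congr_deriv ?_
      have hx2 : x ≠ 0 := hx0.ne'
      field_simp
      ring
    have h2in : HasDerivAt (fun y : ℝ =>
        ((2 * c - a - b) * (c - y ^ 2) - 2 * ((c - a) * (c - b))) / ((c - y ^ 2) * (b - a)))
        (-(4 * x * ((c - a) * (c - b))) / ((c - x ^ 2) ^ 2 * (b - a))) x := by
      have hnum : HasDerivAt
          (fun y : ℝ => (2 * c - a - b) * (c - y ^ 2) - 2 * ((c - a) * (c - b)))
          ((2 * c - a - b) * (-2 * x)) x := by
        have h' : HasDerivAt (fun y : ℝ => c - y ^ 2) (-2 * x) x := by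
          have := (hasDerivAt_pow 2 x).const_sub c
          refine this.congr_deriv ?_
          push_cast; ring
        have := (h'.const_mul (2 * c - a - b)).sub_const (2 * ((c - a) * (c - b)))
        convert this using 1
      have hden : HasDerivAt (fun y : ℝ => (c - y ^ 2) * (b - a)) (-2 * x * (b - a)) x := by
        have h' : HasDerivAt (fun y : ℝ => c - y ^ 2) (-2 * x) x := by
          have := (hasDerivAt_pow 2 x).const_sub c
          refine this.congr_deriv ?_
          push_cast; ring
        exact h'.mul_const (b - a)
      have hden0 : (c - x ^ 2) * (b - a) ≠ 0 := by positivity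
      have := hnum.div hden hden0
      refine this.congr_deriv ?_
      field_simp
      ring
    -- arcsin compositions
    have hA0 : HasDerivAt (fun y : ℝ => Real.arcsin ((2 * y ^ 2 - a - b) / (b - a)))
        (1 / Real.sqrt (1 - ((2 * x ^ 2 - a - b) / (b - a)) ^ 2) * (4 * x / (b - a))) x :=
      (Real.hasDerivAt_arcsin (neOf _ p0).1 (neOf _ p0).2).comp (h₂ := Real.arcsin) x h0in
    have hA1 : HasDerivAt
        (fun y : ℝ => Real.arcsin (((a + b) * y ^ 2 - 2 * (a * b)) / (y ^ 2 * (b - a))))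
        (1 / Real.sqrt (1 - (((a + b) * x ^ 2 - 2 * (a * b)) / (x ^ 2 * (b - a))) ^ 2) *
          (4 * (a * b) / (x ^ 3 * (b - a)))) x :=
      (Real.hasDerivAt_arcsin (neOf _ p1).1 (neOf _ p1).2).comp (h₂ := Real.arcsin) x h1in
    have hA2 : HasDerivAt
        (fun y : ℝ => Real.arcsin
          (((2 * c - a - b) * (c - y ^ 2) - 2 * ((c - a) * (c - b))) / ((c - y ^ 2) * (b - a))))
        (1 / Real.sqrt (1 - (((2 * c - a - b) * (c - x ^ 2) - 2 * ((c - a) * (c - b)))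
            / ((c - x ^ 2) * (b - a))) ^ 2) *
          (-(4 * x * ((c - a) * (c - b))) / ((c - x ^ 2) ^ 2 * (b - a)))) x :=
      (Real.hasDerivAt_arcsin (neOf _ p2).1 (neOf _ p2).2).comp (h₂ := Real.arcsin) x h2in
    have comb := (((hA0.const_mul c).sub (hA1.const_mul sab)).add
      (hA2.const_mul scc)).const_mul (1 / (2 * c))
    refine comb.congr_deriv ?_
    symm
    rw [key0, key1, key2]
    have hx2 : x ≠ 0 := hx0.ne'
    have T0 : c * (1 / (2 / (b - a) * s) * (4 * x / (b - a))) = 2 * c * x / s := by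
      field_simp
      ring
    have T1 : sab * (1 / (2 * sab / (x ^ 2 * (b - a)) * s) * (4 * (a * b) / (x ^ 3 * (b - a))))
        = 2 * (a * b) / (x * s) := by
      field_simp
      ring
    have T2 : scc * (1 / (2 * scc / ((c - x ^ 2) * (b - a)) * s) *
          (-(4 * x * ((c - a) * (c - b))) / ((c - x ^ 2) ^ 2 * (b - a))))
        = -(2 * x * ((c - a) * (c - b)) / ((c - x ^ 2) * s)) := by
      field_simp
      ring
    rw [T0, T1, T2]
    rw [div_eq_iff (by positivity), eq_comm]
    field_simp
    linear_combination (-c) * hs2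
  rw [integral_eq_sub_of_hasDerivAt_of_le hsb.le hcont hderiv hint]
  have hb2 : Real.sqrt b ^ 2 = b := Real.sq_sqrt hb.le
  have ha2 : Real.sqrt a ^ 2 = a := Real.sq_sqrt ha.le
  rw [hF]
  simp only [hb2, ha2]
  have eb0 : (2 * b - a - b) / (b - a) = 1 := by
    rw [div_eq_one_iff_eq hban]; ring
  have eb1 : ((a + b) * b - 2 * (a * b)) / (b * (b - a)) = 1 := by
    rw [div_eq_one_iff_eq (by positivity)]; ring
  have eb2 : ((2 * c - a - b) * (c - b) - 2 * ((c - a) * (c - b))) / ((c - b) * (b - a))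
      = -1 := by
    rw [div_eq_iff (by positivity)]; ring
  have ea0 : (2 * a - a - b) / (b - a) = -1 := by
    rw [div_eq_iff hban]; ring
  have ea1 : ((a + b) * a - 2 * (a * b)) / (a * (b - a)) = -1 := by
    rw [div_eq_iff (by positivity)]; ring
  have ea2 : ((2 * c - a - b) * (c - a) - 2 * ((c - a) * (c - b))) / ((c - a) * (b - a))
      = 1 := by
    rw [div_eq_one_iff_eq (by positivity)]; ring
  rw [eb0, eb1, eb2, ea0, ea1, ea2, Real.arcsin_one, Real.arcsin_neg_one]
  field_simp
  ring

set_option maxHeartbeats 1000000 in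
/-- For `2 ≤ d₁ < d₂`, with `r₋, r₊` the endpoints of the support of the limiting
spectral density of a random `(d₁,d₂)` semi-regular bipartite graph, the integral of
the continuous part of the density over `[r₋, r₊]` equals `d₁/(d₁+d₂)`. -/
theorem rsrb_density_positive_mass (d₁ d₂ : ℝ) (hd₁ : 2 ≤ d₁) (hd₁₂ : d₁ < d₂)
    (D rm rp : ℝ)
    (hD : D = Real.sqrt ((d₁ + d₂ - 2) ^ 2 - (d₂ - d₁) ^ 2))
    (hrp : rp = Real.sqrt (d₁ + d₂ - 2 + D))
    (hrm : rm = Real.sqrt (d₁ + d₂ - 2 - D)) :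
    ∫ x in rm..rp,
        (1 / Real.pi) * (d₁ * d₂ / (d₁ + d₂)) *
          Real.sqrt ((x ^ 2 - rm ^ 2) * (rp ^ 2 - x ^ 2)) / ((d₁ * d₂ - x ^ 2) * x)
      = d₁ / (d₁ + d₂) := by
  have hd2 : (2:ℝ) < d₂ := lt_of_le_of_lt hd₁ hd₁₂
  -- D = 2 * sqrt((d₁-1)(d₂-1))
  set s := Real.sqrt ((d₁ - 1) * (d₂ - 1)) with hsdef
  have hs2 : s ^ 2 = (d₁ - 1) * (d₂ - 1) := Real.sq_sqrt (by nlinarith)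
  have hs0 : 0 ≤ s := Real.sqrt_nonneg _
  have hs1 : 1 < s := by nlinarith
  have hD' : D = 2 * s := by
    rw [hD, show (d₁ + d₂ - 2) ^ 2 - (d₂ - d₁) ^ 2 = 2 ^ 2 * ((d₁ - 1) * (d₂ - 1)) by ring,
      Real.sqrt_mul (by norm_num), Real.sqrt_sq (by norm_num)]
  set a := d₁ + d₂ - 2 - D with hadef
  set b := d₁ + d₂ - 2 + D with hbdef
  set c := d₁ * d₂ with hcdef
  -- p, q
  have hp2 : Real.sqrt (d₁ - 1) ^ 2 = d₁ - 1 := Real.sq_sqrt (by linarith)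
  have hq2 : Real.sqrt (d₂ - 1) ^ 2 = d₂ - 1 := Real.sq_sqrt (by linarith)
  have hpq : s = Real.sqrt (d₁ - 1) * Real.sqrt (d₂ - 1) := by
    rw [hsdef, Real.sqrt_mul (by linarith)]
  have hplq : Real.sqrt (d₁ - 1) < Real.sqrt (d₂ - 1) :=
    Real.sqrt_lt_sqrt (by linarith) (by linarith)
  have ha : 0 < a := by
    rw [hadef, hD', hpq]
    nlinarith [Real.sqrt_nonneg (d₁ - 1), Real.sqrt_nonneg (d₂ - 1)]
  have hab : a < b := by rw [hadef, hbdef, hD']; linarith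
  have hbc : b < c := by rw [hbdef, hcdef, hD']; nlinarith
  have hrm2 : rm ^ 2 = a := by rw [hrm]; exact Real.sq_sqrt ha.le
  have hrp2 : rp ^ 2 = b := by rw [hrp]; exact Real.sq_sqrt (by linarith)
  have hrm' : rm = Real.sqrt a := hrm
  have hrp' : rp = Real.sqrt b := hrp
  have hK := key a b c ha hab hbc
  have hsab : Real.sqrt (a * b) = d₂ - d₁ := by
    rw [show a * b = (d₂ - d₁) ^ 2 by rw [hadef, hbdef, hD']; nlinarith [hs2]]
    exact Real.sqrt_sq (by linarith)
  have hscc : Real.sqrt ((c - a) * (c - b)) = c - d₁ - d₂ := by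
    rw [show (c - a) * (c - b) = (c - d₁ - d₂) ^ 2 by
      rw [hadef, hbdef, hcdef, hD']; nlinarith [hs2]]
    exact Real.sqrt_sq (by nlinarith [hs2])
  rw [hsab, hscc] at hK
  calc ∫ x in rm..rp,
        (1 / Real.pi) * (d₁ * d₂ / (d₁ + d₂)) *
          Real.sqrt ((x ^ 2 - rm ^ 2) * (rp ^ 2 - x ^ 2)) / ((d₁ * d₂ - x ^ 2) * x)
      = ∫ x in Real.sqrt a..Real.sqrt b,
          (1 / Real.pi) * (c / (d₁ + d₂)) *
            (Real.sqrt ((x ^ 2 - a) * (b - x ^ 2)) / ((c - x ^ 2) * x)) := by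
        rw [hrm', hrp']
        congr 1
        ext x
        rw [Real.sq_sqrt ha.le, Real.sq_sqrt (ha.trans hab).le, ← hcdef]
        ring
    _ = (1 / Real.pi) * (c / (d₁ + d₂)) *
          (Real.pi * (c - (d₂ - d₁) - (c - d₁ - d₂)) / (2 * c)) := by
        rw [intervalIntegral.integral_const_mul, hK]
    _ = d₁ / (d₁ + d₂) := by
        have hc : (0:ℝ) < c := by rw [hcdef]; nlinarith
        have hdd : (0:ℝ) < d₁ + d₂ := by linarith
        have hpi := Real.pi_ne_zero
        field_simp
        ring
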